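/- Let A, B, C be three affinely independent points in the Euclidean plane whose three altitude lengths h_A = dist(A, line BC), h_B = dist(B, line CA), h_C = dist(C, line AB) are pairwise distinct (a scalene triangle). If k lies strictly between the smallest and the largest of h_A, h_B, h_C, then the locus T_k = {P ∈ convexHull{A,B,C} : V(P) = k} is a line segment whose endpoints lie on the boundary of the triangle: there exist points P, Q in the frontier of the convex hull of {A,B,C} with T_k = segment [P, Q]. -/

import Mathlib

noncomputable section

/-- The point `(x, y)` of the Euclidean plane `ℝ²`. -/
def pt (x y : ℝ) : EuclideanSpace ℝ (Fin 2) :=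
  (WithLp.equiv 2 (Fin 2 → ℝ)).symm ![x, y]

/-- The line through `X` and `Y`, i.e. the affine span of `{X, Y}`, as a set. -/
def lineThrough (X Y : EuclideanSpace ℝ (Fin 2)) : Set (EuclideanSpace ℝ (Fin 2)) :=
  (affineSpan ℝ {X, Y} : AffineSubspace ℝ (EuclideanSpace ℝ (Fin 2)))

/-- The distance sum function of the triangle `ABC`:
`V(P) = dist(P, line BC) + dist(P, line CA) + dist(P, line AB)`. -/
def vSum (A B C P : EuclideanSpace ℝ (Fin 2)) : ℝ :=
  Metric.infDist P (lineThrough B C) + Metric.infDist P (lineThrough C A) +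
    Metric.infDist P (lineThrough A B)

/-- The squared-distance sum function of the triangle `ABC`:
`W(P) = dist(P, line BC)² + dist(P, line CA)² + dist(P, line AB)²`. -/
def wSum (A B C P : EuclideanSpace ℝ (Fin 2)) : ℝ :=
  Metric.infDist P (lineThrough B C) ^ 2 + Metric.infDist P (lineThrough C A) ^ 2 +
    Metric.infDist P (lineThrough A B) ^ 2

open Metric Set
open scoped RealInnerProductSpace

local notation "E2" => EuclideanSpace ℝ (Fin 2)

lemma exists_unit_orthocomp (v : E2) (hv : v ≠ 0) :
    ∃ d : E2, ‖d‖ = 1 ∧ (ℝ ∙ v)ᗮ = ℝ ∙ d := by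
  have hfin : Module.finrank ℝ E2 = 2 := finrank_euclideanSpace_fin
  have h1 : Module.finrank ℝ (ℝ ∙ v) = 1 := finrank_span_singleton hv
  have h2 : Module.finrank ℝ ((ℝ ∙ v)ᗮ) = 1 := by
    have := (ℝ ∙ v).finrank_add_finrank_orthogonal
    omega
  have hne : ((ℝ ∙ v)ᗮ) ≠ ⊥ := by
    intro h
    rw [h] at h2
    simp at h2
  obtain ⟨x, hx, hx0⟩ := Submodule.exists_mem_ne_zero_of_ne_bot hne
  refine ⟨‖x‖⁻¹ • x, norm_smul_inv_norm hx0, ?_⟩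
  have hmem : ‖x‖⁻¹ • x ∈ (ℝ ∙ v)ᗮ := Submodule.smul_mem _ _ hx
  have hle : (ℝ ∙ (‖x‖⁻¹ • x)) ≤ (ℝ ∙ v)ᗮ := by
    rwa [Submodule.span_singleton_le_iff_mem]
  refine (Submodule.eq_of_le_of_finrank_eq hle ?_).symm
  rw [h2, finrank_span_singleton]
  intro h
  apply hx0
  simpa [smul_eq_zero, inv_eq_zero, norm_eq_zero, hx0] using h

lemma mem_lineThrough_iff {X Y : E2} (P : E2) :
    P ∈ lineThrough X Y ↔ ∃ s : ℝ, P = X + s • (Y - X) := by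
  constructor
  · intro hP
    have hX : X ∈ affineSpan ℝ ({X, Y} : Set E2) :=
      subset_affineSpan ℝ _ (by simp)
    have hdir : P -ᵥ X ∈ (affineSpan ℝ ({X, Y} : Set E2)).direction :=
      AffineSubspace.vsub_mem_direction hP hX
    rw [direction_affineSpan, vectorSpan_pair] at hdir
    rw [Submodule.mem_span_singleton] at hdir
    obtain ⟨s, hs⟩ := hdir
    refine ⟨-s, ?_⟩
    have h2 : P - X = s • (X - Y) := by
      simpa [vsub_eq_sub] using hs.symm
    linear_combination (norm := module) h2
  · rintro ⟨s, rfl⟩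
    have hX : X ∈ affineSpan ℝ ({X, Y} : Set E2) :=
      subset_affineSpan ℝ _ (by simp)
    have hmem : s • (Y - X) ∈ (affineSpan ℝ ({X, Y} : Set E2)).direction := by
      rw [direction_affineSpan, vectorSpan_pair]
      exact Submodule.smul_mem _ _ (by
        rw [Submodule.mem_span_singleton]
        exact ⟨-1, by rw [vsub_eq_sub, neg_one_smul, neg_sub]⟩)
    have := AffineSubspace.vadd_mem_of_mem_direction hmem hX
    simpa [lineThrough, vadd_eq_add, add_comm] using this

lemma infDist_lineThrough {X Y n : E2} (hn : ‖n‖ = 1)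
    (hsp : (ℝ ∙ (Y - X))ᗮ = ℝ ∙ n) (P : E2) :
    Metric.infDist P (lineThrough X Y) = |⟪P - X, n⟫| := by
  have hnmem : n ∈ (ℝ ∙ (Y - X))ᗮ := by
    rw [hsp]; exact Submodule.mem_span_singleton_self n
  have horth : ⟪Y - X, n⟫ = 0 :=
    Submodule.mem_orthogonal_singleton_iff_inner_right.mp hnmem
  have hXmem : X ∈ lineThrough X Y := (mem_lineThrough_iff X).mpr ⟨0, by simp⟩
  have hne : (lineThrough X Y).Nonempty := ⟨X, hXmem⟩
  set c : ℝ := ⟪P - X, n⟫ with hc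
  apply le_antisymm
  · -- the foot R = P - c • n lies on the line
    have hwmem : P - X - c • n ∈ ℝ ∙ (Y - X) := by
      have heq : (ℝ ∙ (Y - X)) = (ℝ ∙ n)ᗮ := by
        rw [← hsp, Submodule.orthogonal_orthogonal]
      rw [heq]
      refine Submodule.mem_orthogonal_singleton_iff_inner_left.mpr ?_
      rw [inner_sub_left, real_inner_smul_left, real_inner_self_eq_norm_sq, hn]
      simp [hc]
    rw [Submodule.mem_span_singleton] at hwmem
    obtain ⟨s, hs⟩ := hwmem
    have hRmem : P - c • n ∈ lineThrough X Y := by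
      rw [mem_lineThrough_iff]
      exact ⟨s, by linear_combination (norm := module) hs.symm⟩
    calc Metric.infDist P (lineThrough X Y) ≤ dist P (P - c • n) :=
          Metric.infDist_le_dist_of_mem hRmem
      _ = |c| := by
          rw [dist_eq_norm]
          simp [norm_smul, hn]
  · by_contra h
    push_neg at h
    rw [Metric.infDist_lt_iff hne] at h
    obtain ⟨R, hR, hd⟩ := h
    rw [mem_lineThrough_iff] at hR
    obtain ⟨s, rfl⟩ := hR
    have h1 : dist P (X + s • (Y - X)) = ‖P - X - s • (Y - X)‖ := by
      rw [dist_eq_norm]; congr 1; abel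
    have h2 : |c| = |⟪P - X - s • (Y - X), n⟫| := by
      rw [inner_sub_left, real_inner_smul_left, horth]
      simp [hc]
    have h3 : |⟪P - X - s • (Y - X), n⟫| ≤ ‖P - X - s • (Y - X)‖ := by
      calc |⟪P - X - s • (Y - X), n⟫| ≤ ‖P - X - s • (Y - X)‖ * ‖n‖ :=
            abs_real_inner_le_norm _ _
        _ = ‖P - X - s • (Y - X)‖ := by rw [hn, mul_one]
    rw [h1] at hd
    linarith [h2 ▸ h3]

lemma exists_normal (X Y Z : E2) (hXY : X ≠ Y) :
    ∃ n : E2, ‖n‖ = 1 ∧ (ℝ ∙ (Y - X))ᗮ = (ℝ ∙ n) ∧ 0 ≤ ⟪Z - X, n⟫ := by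
  obtain ⟨n, hn, hsp⟩ := exists_unit_orthocomp (Y - X) (sub_ne_zero.mpr hXY.symm)
  rcases le_or_gt 0 ⟪Z - X, n⟫ with h | h
  · exact ⟨n, hn, hsp, h⟩
  · refine ⟨-n, by simpa using hn, ?_, ?_⟩
    · rw [hsp]
      apply le_antisymm
      · rw [Submodule.span_singleton_le_iff_mem]
        exact Submodule.mem_span_singleton.mpr ⟨-1, by simp⟩
      · rw [Submodule.span_singleton_le_iff_mem]
        exact Submodule.neg_mem _ (Submodule.mem_span_singleton_self n)
    · rw [inner_neg_right]
      linarith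

/-- **Proposition 2.** For a scalene triangle (pairwise distinct altitude lengths) and `k`
strictly between the smallest and the largest altitude, the locus `T_k` is a line segment
whose endpoints lie on the boundary of the triangle. -/
theorem stmt_6 (A B C : EuclideanSpace ℝ (Fin 2))
    (hind : AffineIndependent ℝ ![A, B, C])
    (hAB : Metric.infDist A (lineThrough B C) ≠ Metric.infDist B (lineThrough C A))
    (hBC : Metric.infDist B (lineThrough C A) ≠ Metric.infDist C (lineThrough A B))
    (hAC : Metric.infDist A (lineThrough B C) ≠ Metric.infDist C (lineThrough A B)) (k : ℝ)
    (hk₁ : min (Metric.infDist A (lineThrough B C))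
      (min (Metric.infDist B (lineThrough C A)) (Metric.infDist C (lineThrough A B))) < k)
    (hk₂ : k < max (Metric.infDist A (lineThrough B C))
      (max (Metric.infDist B (lineThrough C A)) (Metric.infDist C (lineThrough A B)))) :
    ∃ P Q : EuclideanSpace ℝ (Fin 2),
      P ∈ frontier (convexHull ℝ ({A, B, C} : Set (EuclideanSpace ℝ (Fin 2)))) ∧
      Q ∈ frontier (convexHull ℝ ({A, B, C} : Set (EuclideanSpace ℝ (Fin 2)))) ∧
      {P' ∈ convexHull ℝ ({A, B, C} : Set (EuclideanSpace ℝ (Fin 2))) | vSum A B C P' = k}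
        = segment ℝ P Q := by
  -- distinct vertices
  have hne01 : A ≠ B := by
    have := hind.injective.ne (a₁ := (0 : Fin 3)) (a₂ := 1) (by decide)
    simpa using this
  have hne12 : B ≠ C := by
    have := hind.injective.ne (a₁ := (1 : Fin 3)) (a₂ := 2) (by decide)
    simpa using this
  have hne02 : A ≠ C := by
    have := hind.injective.ne (a₁ := (0 : Fin 3)) (a₂ := 2) (by decide)
    simpa using this
  -- normals to the three sides
  obtain ⟨n₁, hn₁, hsp₁, hpos₁⟩ := exists_normal B C A hne12
  obtain ⟨n₂, hn₂, hsp₂, hpos₂⟩ := exists_normal C A B hne02.symm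
  obtain ⟨n₃, hn₃, hsp₃, hpos₃⟩ := exists_normal A B C hne01
  set T : Set E2 := convexHull ℝ ({A, B, C} : Set E2) with hT
  have hTconv : Convex ℝ T := convex_convexHull ℝ _
  have hTcomp : IsCompact T :=
    (Set.toFinite ({A, B, C} : Set E2)).isCompact_convexHull ℝ
  have hTclosed : IsClosed T := hTcomp.isClosed
  have hAT : A ∈ T := subset_convexHull ℝ _ (by simp)
  have hBT : B ∈ T := subset_convexHull ℝ _ (by simp)
  have hCT : C ∈ T := subset_convexHull ℝ _ (by simp)
  -- the affine function g agreeing with vSum on T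
  set g : E2 → ℝ := fun P => ⟪P - B, n₁⟫ + ⟪P - C, n₂⟫ + ⟪P - A, n₃⟫ with hg
  have hdist₁ : ∀ P : E2, Metric.infDist P (lineThrough B C) = |⟪P - B, n₁⟫| :=
    fun P => infDist_lineThrough hn₁ hsp₁ P
  have hdist₂ : ∀ P : E2, Metric.infDist P (lineThrough C A) = |⟪P - C, n₂⟫| :=
    fun P => infDist_lineThrough hn₂ hsp₂ P
  have hdist₃ : ∀ P : E2, Metric.infDist P (lineThrough A B) = |⟪P - A, n₃⟫| :=
    fun P => infDist_lineThrough hn₃ hsp₃ P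
  -- inner products of side vectors with their own normals vanish
  have hz₁ : ⟪C - B, n₁⟫ = 0 :=
    Submodule.mem_orthogonal_singleton_iff_inner_right.mp
      (by rw [hsp₁]; exact Submodule.mem_span_singleton_self n₁)
  have hz₂ : ⟪A - C, n₂⟫ = 0 :=
    Submodule.mem_orthogonal_singleton_iff_inner_right.mp
      (by rw [hsp₂]; exact Submodule.mem_span_singleton_self n₂)
  have hz₃ : ⟪B - A, n₃⟫ = 0 :=
    Submodule.mem_orthogonal_singleton_iff_inner_right.mp
      (by rw [hsp₃]; exact Submodule.mem_span_singleton_self n₃)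
  -- affine combination identity for the basic pieces
  have key : ∀ (w n x y : E2) (a b : ℝ), a + b = 1 →
      ⟪a • x + b • y - w, n⟫ = a * ⟪x - w, n⟫ + b * ⟪y - w, n⟫ := by
    intro w n x y a b hab
    have hxy : a • x + b • y - w = a • (x - w) + b • (y - w) := by
      have hw : a • w + b • w = w := by rw [← add_smul, hab, one_smul]
      rw [smul_sub, smul_sub]
      conv_lhs => rw [← hw]
      abel
    rw [hxy, inner_add_left, real_inner_smul_left, real_inner_smul_left]
  have gaff : ∀ (x y : E2) (a b : ℝ), a + b = 1 →
      g (a • x + b • y) = a * g x + b * g y := by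
    intro x y a b hab
    simp only [hg]
    rw [key B n₁ x y a b hab, key C n₂ x y a b hab, key A n₃ x y a b hab]
    ring
  -- each piece is nonnegative on T
  have hnn : ∀ (w n : E2), 0 ≤ ⟪A - w, n⟫ → 0 ≤ ⟪B - w, n⟫ → 0 ≤ ⟪C - w, n⟫ →
      ∀ P ∈ T, 0 ≤ ⟪P - w, n⟫ := by
    intro w n hA' hB' hC' P hP
    have hconv : Convex ℝ {x : E2 | 0 ≤ ⟪x - w, n⟫} := by
      intro x hx y hy a b ha hb hab
      simp only [Set.mem_setOf_eq] at hx hy ⊢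
      rw [key w n x y a b hab]
      positivity
    have hsub : T ⊆ {x : E2 | 0 ≤ ⟪x - w, n⟫} := by
      rw [hT]
      apply convexHull_min _ hconv
      intro x hx
      simp only [Set.mem_insert_iff, Set.mem_singleton_iff] at hx
      rcases hx with rfl | rfl | rfl <;> assumption
    exact hsub hP
  have hnn₁ : ∀ P ∈ T, 0 ≤ ⟪P - B, n₁⟫ :=
    hnn B n₁ hpos₁ (by simp) (le_of_eq hz₁.symm)
  have hnn₂ : ∀ P ∈ T, 0 ≤ ⟪P - C, n₂⟫ :=
    hnn C n₂ (le_of_eq hz₂.symm) hpos₂ (by simp)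
  have hnn₃ : ∀ P ∈ T, 0 ≤ ⟪P - A, n₃⟫ :=
    hnn A n₃ (by simp) (le_of_eq hz₃.symm) hpos₃
  -- vSum agrees with g on T
  have hveq : ∀ P ∈ T, vSum A B C P = g P := by
    intro P hP
    rw [vSum, hdist₁ P, hdist₂ P, hdist₃ P, abs_of_nonneg (hnn₁ P hP),
      abs_of_nonneg (hnn₂ P hP), abs_of_nonneg (hnn₃ P hP)]
  -- vertex values
  have hgA : g A = Metric.infDist A (lineThrough B C) := by
    rw [hdist₁ A, abs_of_nonneg hpos₁]
    simp only [hg]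
    rw [hz₂]
    simp
  have hgB : g B = Metric.infDist B (lineThrough C A) := by
    rw [hdist₂ B, abs_of_nonneg hpos₂]
    simp only [hg]
    rw [hz₃]
    simp
  have hgC : g C = Metric.infDist C (lineThrough A B) := by
    rw [hdist₃ C, abs_of_nonneg hpos₃]
    simp only [hg]
    rw [hz₁]
    simp
  -- the gradient N
  set N : E2 := n₁ + n₂ + n₃ with hN
  have hgdiff : ∀ x y : E2, g x - g y = ⟪x - y, N⟫ := by
    intro x y
    have e₁ : ⟪x - y, n₁⟫ = ⟪x - B, n₁⟫ - ⟪y - B, n₁⟫ := by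
      rw [← inner_sub_left]; congr 1; abel
    have e₂ : ⟪x - y, n₂⟫ = ⟪x - C, n₂⟫ - ⟪y - C, n₂⟫ := by
      rw [← inner_sub_left]; congr 1; abel
    have e₃ : ⟪x - y, n₃⟫ = ⟪x - A, n₃⟫ - ⟪y - A, n₃⟫ := by
      rw [← inner_sub_left]; congr 1; abel
    simp only [hg, hN, inner_add_right]
    rw [e₁, e₂, e₃]
    ring
  have hN0 : N ≠ 0 := by
    intro h
    apply hAB
    rw [← hgA, ← hgB]
    have := hgdiff A B
    rw [h] at this
    simp at this
    linarith [this]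
  -- continuity of g
  have hgc : Continuous g := by
    simp only [hg]
    exact ((continuous_id.sub continuous_const).inner continuous_const).add
        ((continuous_id.sub continuous_const).inner continuous_const) |>.add
        ((continuous_id.sub continuous_const).inner continuous_const)
  -- find a point of T on the level set, via IVT
  have hu : ∃ u ∈ T, g u < k := by
    rcases min_lt_iff.mp hk₁ with h | h
    · exact ⟨A, hAT, by rwa [hgA]⟩
    rcases min_lt_iff.mp h with h | h
    · exact ⟨B, hBT, by rwa [hgB]⟩
    · exact ⟨C, hCT, by rwa [hgC]⟩
  have hv : ∃ v ∈ T, k < g v := by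
    rcases lt_max_iff.mp hk₂ with h | h
    · exact ⟨A, hAT, by rwa [hgA]⟩
    rcases lt_max_iff.mp h with h | h
    · exact ⟨B, hBT, by rwa [hgB]⟩
    · exact ⟨C, hCT, by rwa [hgC]⟩
  obtain ⟨u, huT, hu'⟩ := hu
  obtain ⟨v, hvT, hv'⟩ := hv
  have hivt : ∃ p₀ ∈ T, g p₀ = k := by
    set ψ : ℝ → ℝ := fun t => g ((1 - t) • u + t • v) with hψ
    have hψc : Continuous ψ := by
      apply hgc.comp
      exact ((continuous_const.sub continuous_id).smul continuous_const).add
        (continuous_id.smul continuous_const)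
    have hmem : k ∈ Set.Icc (ψ 0) (ψ 1) := by
      constructor
      · simp only [hψ]
        norm_num
        linarith
      · simp only [hψ]
        norm_num
        linarith
    have := intermediate_value_Icc (zero_le_one) hψc.continuousOn hmem
    obtain ⟨t, ht, htk⟩ := this
    refine ⟨(1 - t) • u + t • v, ?_, htk⟩
    exact hTconv huT hvT (by linarith [ht.2]) ht.1 (by ring)
  obtain ⟨p₀, hp₀T, hp₀⟩ := hivt
  -- the direction of the level line
  obtain ⟨d, hd, hspd⟩ := exists_unit_orthocomp N hN0
  have hdN : ⟪N, d⟫ = 0 :=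
    Submodule.mem_orthogonal_singleton_iff_inner_right.mp
      (by rw [hspd]; exact Submodule.mem_span_singleton_self d)
  set φ : ℝ → E2 := fun t => p₀ + t • d with hφ
  have hφk : ∀ t, g (φ t) = k := by
    intro t
    have h1 : g (φ t) - g p₀ = ⟪φ t - p₀, N⟫ := hgdiff _ _
    have h2 : φ t - p₀ = t • d := by simp [hφ]
    rw [h2, real_inner_smul_left, ← real_inner_comm, hdN] at h1
    rw [hp₀] at h1
    linarith
  have hlevel : ∀ x : E2, g x = k → ∃ t, x = φ t := by
    intro x hx
    have h1 : ⟪x - p₀, N⟫ = 0 := by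
      have := hgdiff x p₀
      rw [hx, hp₀] at this
      linarith [this]
    have h2 : x - p₀ ∈ (ℝ ∙ N)ᗮ :=
      Submodule.mem_orthogonal_singleton_iff_inner_left.mpr h1
    rw [hspd, Submodule.mem_span_singleton] at h2
    obtain ⟨t, ht⟩ := h2
    exact ⟨t, by simp only [hφ]; linear_combination (norm := module) -ht⟩
  -- the locus as a set
  set S : Set E2 := {x ∈ T | g x = k} with hS
  have hSconv : Convex ℝ S := by
    intro x hx y hy a b ha hb hab
    obtain ⟨hxT, hxk⟩ := hx
    obtain ⟨hyT, hyk⟩ := hy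
    constructor
    · exact hTconv hxT hyT ha hb hab
    · rw [gaff x y a b hab, hxk, hyk]
      linear_combination k * hab
  have hSclosed : IsClosed S := by
    have : S = T ∩ {x : E2 | g x = k} := by
      ext x; simp [hS, Set.mem_sep_iff]
    rw [this]
    exact hTclosed.inter (isClosed_eq hgc continuous_const)
  -- the parameter set
  set I : Set ℝ := {t : ℝ | φ t ∈ S} with hI
  have hφc : Continuous φ := by
    simp only [hφ]
    exact continuous_const.add (continuous_id.smul continuous_const)
  have hIclosed : IsClosed I := hSclosed.preimage hφc
  have hIconv : Convex ℝ I := by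
    intro t₁ h₁ t₂ h₂ a b ha hb hab
    have hφcomb : φ (a • t₁ + b • t₂) = a • φ t₁ + b • φ t₂ := by
      simp only [hφ, smul_eq_mul]
      have h1 : a • (p₀ + t₁ • d) + b • (p₀ + t₂ • d)
          = (a + b) • p₀ + (a * t₁ + b * t₂) • d := by module
      rw [h1, hab, one_smul]
    have : φ (a • t₁ + b • t₂) ∈ S := by
      rw [hφcomb]
      exact hSconv h₁ h₂ ha hb hab
    exact this
  have hI0 : (0 : ℝ) ∈ I := by
    have h0 : φ 0 = p₀ := by simp [hφ]
    simp only [hI, Set.mem_setOf_eq, h0]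
    exact ⟨hp₀T, hp₀⟩
  have hIbdd : Bornology.IsBounded I := by
    obtain ⟨R, hR⟩ := isBounded_iff_forall_norm_le.mp hTcomp.isBounded
    apply (Metric.isBounded_Icc (-(R + ‖p₀‖)) (R + ‖p₀‖)).subset
    intro t ht
    have h1 : φ t ∈ T := ht.1
    have h2 : ‖φ t - p₀‖ = |t| := by
      simp [hφ, norm_smul, hd]
    have h3 : |t| ≤ R + ‖p₀‖ := by
      rw [← h2]
      calc ‖φ t - p₀‖ ≤ ‖φ t‖ + ‖p₀‖ := norm_sub_le _ _
        _ ≤ R + ‖p₀‖ := by linarith [hR (φ t) h1]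
    rw [Set.mem_Icc]
    constructor <;> [linarith [neg_abs_le t]; linarith [le_abs_self t]]
  have hIcomp : IsCompact I := Metric.isCompact_of_isClosed_isBounded hIclosed hIbdd
  have hIne : I.Nonempty := ⟨0, hI0⟩
  have hIcc : I = Set.Icc (sInf I) (sSup I) :=
    eq_Icc_of_connected_compact ⟨hIne, hIconv.isPreconnected⟩ hIcomp
  set a := sInf I with ha
  set b := sSup I with hb
  have hab : a ≤ b := by
    have := hIcc ▸ hI0
    exact le_trans this.1 this.2
  have haI : a ∈ I := by rw [hIcc]; exact ⟨le_refl a, hab⟩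
  have hbI : b ∈ I := by rw [hIcc]; exact ⟨hab, le_refl b⟩
  -- S is the image of I
  have hSim : S = φ '' I := by
    ext x
    constructor
    · intro hx
      obtain ⟨t, rfl⟩ := hlevel x hx.2
      exact ⟨t, hx, rfl⟩
    · rintro ⟨t, ht, rfl⟩
      exact ht
  -- the image of an interval is a segment
  have hseg : φ '' Set.Icc a b = segment ℝ (φ a) (φ b) := by
    have hl : ∀ t : ℝ, AffineMap.lineMap p₀ (p₀ + d) t = φ t := by
      intro t
      rw [AffineMap.lineMap_apply]
      simp [hφ, vsub_eq_sub, vadd_eq_add]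
      abel
    rw [← segment_eq_Icc hab, ← hl a, ← hl b, ← image_segment ℝ (AffineMap.lineMap p₀ (p₀ + d)) a b]
    exact Set.image_congr fun t _ => (hl t).symm
  -- endpoints lie on the frontier
  have hfr : ∀ t₀ : ℝ, φ t₀ ∈ interior T → ∃ ε > (0 : ℝ), t₀ - ε ∈ I ∧ t₀ + ε ∈ I := by
    intro t₀ hint
    obtain ⟨ε, hε, hball⟩ := Metric.isOpen_iff.mp isOpen_interior (φ t₀) hint
    refine ⟨ε / 2, by linarith, ?_, ?_⟩
    · have hmem : φ (t₀ - ε / 2) ∈ Metric.ball (φ t₀) ε := by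
        rw [Metric.mem_ball, dist_eq_norm]
        have h4 : φ (t₀ - ε / 2) - φ t₀ = (-(ε / 2)) • d := by
          simp only [hφ]; module
        rw [h4, norm_smul, hd, mul_one, Real.norm_eq_abs,
          abs_of_neg (by linarith : -(ε / 2) < 0)]
        linarith
      exact ⟨interior_subset (hball hmem), hφk _⟩
    · have hmem : φ (t₀ + ε / 2) ∈ Metric.ball (φ t₀) ε := by
        rw [Metric.mem_ball, dist_eq_norm]
        have h4 : φ (t₀ + ε / 2) - φ t₀ = (ε / 2) • d := by
          simp only [hφ]; module
        rw [h4, norm_smul, hd, mul_one, Real.norm_eq_abs,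
          abs_of_pos (by linarith : (0:ℝ) < ε / 2)]
        linarith
      exact ⟨interior_subset (hball hmem), hφk _⟩
  have haS : φ a ∈ S := haI
  have hbS : φ b ∈ S := hbI
  have hPf : φ a ∈ frontier T := by
    rw [hTclosed.frontier_eq]
    refine ⟨haS.1, fun hint => ?_⟩
    obtain ⟨ε, hε, h1, _⟩ := hfr a hint
    have h2 : a - ε ∈ Set.Icc a b := hIcc ▸ h1
    linarith [h2.1]
  have hQf : φ b ∈ frontier T := by
    rw [hTclosed.frontier_eq]
    refine ⟨hbS.1, fun hint => ?_⟩
    obtain ⟨ε, hε, _, h2⟩ := hfr b hint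
    have h3 : b + ε ∈ Set.Icc a b := hIcc ▸ h2
    linarith [h3.2]
  refine ⟨φ a, φ b, hPf, hQf, ?_⟩
  have hgoal : {P' ∈ T | vSum A B C P' = k} = S := by
    ext x
    simp only [hS, Set.mem_setOf_eq, Set.mem_sep_iff]
    constructor
    · rintro ⟨hxT, hxk⟩
      exact ⟨hxT, by rw [← hveq x hxT]; exact hxk⟩
    · rintro ⟨hxT, hxk⟩
      exact ⟨hxT, by rw [hveq x hxT]; exact hxk⟩
  rw [hgoal, hSim, hIcc, hseg]
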